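/- Let $\rho \in \mathbb{T}^D$ satisfy a Diophantine condition with constants $c > 0$, $d > 1$ (i.e. $d(\theta_* + n\rho, \theta_*) \geq c n^{-d}$ for all $n \geq 1$), and set $r_k = \frac{b}{2} a^{-(k-1)/m}$ with $a > 1$, $0 < b \leq c$, $m \in \mathbb{N}$, $a \geq (m+1)^d$. Then the limsup set $\Omega_\infty = \bigcap_{i=0}^\infty \bigcup_{k=i+1}^\infty B_{r_k}(\tau_k)$, where $\tau_k = \theta_* + k\rho \bmod 1$, has Hausdorff dimension zero. -/

import Mathlib

open Metric MeasureTheory Filter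
open scoped ENNReal NNReal Topology

/-- The limsup set `Ω∞ = ⋂ᵢ ⋃_{k>i} B_{r_k}(τ_k)` with `r_k = (b/2) a^{-(k-1)/m}`
has Hausdorff dimension zero, under the Diophantine condition on the rotation. -/
theorem dimH_limsup_balls_eq_zero
    {D : ℕ} (θstar ρ : Fin D → AddCircle (1 : ℝ))
    (τ : ℕ → Fin D → AddCircle (1 : ℝ)) (hτ : ∀ k, τ k = θstar + k • ρ)
    (c d a b : ℝ) (m : ℕ) (hm : 0 < m)
    (hc : 0 < c) (hd : 1 < d) (ha : 1 < a) (hb : 0 < b) (hbc : b ≤ c)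
    (ham : a ≥ ((m : ℝ) + 1) ^ d)
    (hDio : ∀ n : ℕ, 1 ≤ n → dist (τ n) θstar ≥ c * (n : ℝ) ^ (-d))
    (r : ℕ → ℝ) (hr : ∀ k, r k = b / 2 * a ^ (-((k : ℝ) - 1) / m)) :
    dimH (⋂ i, ⋃ k, ⋃ _ : i < k, ball (τ k) (r k)) = 0 := by
  set Ω := ⋂ i, ⋃ k, ⋃ _ : i < k, ball (τ k) (r k) with hΩ
  have ha0 : (0 : ℝ) < a := by linarith
  have hm0 : (0 : ℝ) < (m : ℝ) := Nat.cast_pos.mpr hm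
  have hrpos : ∀ k, 0 < r k := fun k => by
    rw [hr k]
    have := Real.rpow_pos_of_pos ha0 (-((k : ℝ) - 1) / m)
    positivity
  -- monotonicity of r
  have hrmono : ∀ {j k : ℕ}, j ≤ k → r k ≤ r j := by
    intro j k hjk
    rw [hr j, hr k]
    have hjk' : (j : ℝ) ≤ k := Nat.cast_le.mpr hjk
    have hexp : -((k : ℝ) - 1) / m ≤ -((j : ℝ) - 1) / m :=
      (div_le_div_iff_of_pos_right hm0).mpr (by linarith)
    exact mul_le_mul_of_nonneg_left (Real.rpow_le_rpow_of_exponent_le ha.le hexp)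
      (by positivity)
  -- key: for every positive real s, μH[s] Ω = 0
  have key : ∀ s : ℝ, 0 < s → μH[s] Ω = 0 := by
    intro s hs
    set q : ℝ := a ^ (-(s / (m : ℝ))) with hq
    have hq0 : 0 < q := Real.rpow_pos_of_pos ha0 _
    have hq1 : q < 1 :=
      Real.rpow_lt_one_of_one_lt_of_neg ha (by rw [neg_lt, neg_zero]; positivity)
    set C : ℝ := (2 * r 0) ^ s with hC
    have hgk : ∀ k : ℕ, (2 * r k) ^ s = b ^ s * a ^ (-((k : ℝ) - 1) / m * s) := by
      intro k
      rw [hr k]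
      rw [show (2 : ℝ) * (b / 2 * a ^ (-((k : ℝ) - 1) / m)) = b * a ^ (-((k : ℝ) - 1) / m)
        by ring]
      rw [Real.mul_rpow hb.le (Real.rpow_pos_of_pos ha0 _).le, ← Real.rpow_mul ha0.le]
    have hg : ∀ k : ℕ, (2 * r k) ^ s = C * q ^ k := by
      intro k
      rw [hC, hgk k, hgk 0, ← Real.rpow_natCast q k, hq, ← Real.rpow_mul ha0.le,
        mul_assoc, ← Real.rpow_add ha0]
      congr 2
      push_cast
      ring
    have hgsum : Summable fun k : ℕ => (2 * r k) ^ s := by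
      simp_rw [hg]
      exact (summable_geometric_of_lt_one hq0.le hq1).mul_left C
    have hgnn : ∀ k : ℕ, 0 ≤ (2 * r k) ^ s := fun k =>
      Real.rpow_nonneg (by have := hrpos k; linarith) _
    set F : ℕ → ℝ≥0∞ := fun k => ENNReal.ofReal ((2 * r k) ^ s) with hF
    have hFsum : ∑' k, F k ≠ ∞ := by
      rw [hF, ← ENNReal.ofReal_tsum_of_nonneg hgnn hgsum]
      exact ENNReal.ofReal_ne_top
    set t : ℕ → ℕ → Set (Fin D → AddCircle (1 : ℝ)) :=
      fun n j => ball (τ (j + (n + 1))) (r (j + (n + 1))) with ht_def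
    have hdiam : ∀ n j, EMetric.diam (t n j) ≤ ENNReal.ofReal (2 * r (j + (n + 1))) := by
      intro n j
      rw [ht_def]
      simp only
      rw [← Metric.emetric_ball]
      refine le_trans EMetric.diam_ball ?_
      rw [ENNReal.ofReal_mul (by norm_num), ENNReal.ofReal_ofNat]
    have hr0 : Tendsto (fun k : ℕ => r k) atTop (𝓝 0) := by
      have h2 : Tendsto (fun k : ℕ => C * q ^ k) atTop (𝓝 0) := by
        rw [show (0 : ℝ) = C * 0 by ring]
        exact (tendsto_pow_atTop_nhds_zero_of_lt_one hq0.le hq1).const_mul C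
      have h3 : Tendsto (fun k : ℕ => (2 * r k) ^ s) atTop (𝓝 0) := by
        simp_rw [hg]; exact h2
      have h4 : Tendsto (fun k : ℕ => ((2 * r k) ^ s) ^ s⁻¹) atTop (𝓝 0) := by
        have := h3.rpow_const (p := s⁻¹) (Or.inr (by positivity))
        rwa [Real.zero_rpow (by positivity)] at this
      have h5 : ∀ k : ℕ, ((2 * r k) ^ s) ^ s⁻¹ = 2 * r k := fun k =>
        Real.rpow_rpow_inv (by have := hrpos k; linarith) hs.ne'
      simp_rw [h5] at h4
      have h6 := h4.div_const 2
      simpa using h6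
    have hR0 : Tendsto (fun n : ℕ => ENNReal.ofReal (2 * r (n + 1))) atTop (𝓝 0) := by
      rw [← ENNReal.ofReal_zero]
      apply ENNReal.tendsto_ofReal
      have := (hr0.comp (tendsto_add_atTop_nat 1)).const_mul 2
      simpa [Function.comp] using this
    have hcover : ∀ n : ℕ, Ω ⊆ ⋃ j, t n j := by
      intro n x hx
      have hx' := Set.mem_iInter.mp hx n
      simp only [Set.mem_iUnion] at hx' ⊢
      obtain ⟨k, hk, hxk⟩ := hx'
      refine ⟨k - (n + 1), ?_⟩
      rw [ht_def]
      simp only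
      rw [Nat.sub_add_cancel hk]
      exact hxk
    have hμ := Measure.hausdorffMeasure_le_liminf_tsum s Ω
      (fun n : ℕ => ENNReal.ofReal (2 * r (n + 1))) hR0 t
      (Eventually.of_forall fun n j => (hdiam n j).trans
        (ENNReal.ofReal_le_ofReal (by
          have := hrmono (j := n + 1) (k := j + (n + 1)) (by omega); linarith)))
      (Eventually.of_forall hcover)
    have hterm : ∀ n : ℕ, (∑' j, EMetric.diam (t n j) ^ s) ≤ ∑' j, F (j + (n + 1)) := by
      intro n
      refine ENNReal.tsum_le_tsum fun j => ?_
      calc EMetric.diam (t n j) ^ s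
          ≤ (ENNReal.ofReal (2 * r (j + (n + 1)))) ^ s :=
            ENNReal.rpow_le_rpow (hdiam n j) hs.le
        _ = F (j + (n + 1)) := by
            rw [hF, ENNReal.ofReal_rpow_of_pos (by have := hrpos (j + (n + 1)); linarith)]
    have htail : Tendsto (fun n : ℕ => ∑' j, F (j + (n + 1))) atTop (𝓝 0) :=
      (ENNReal.tendsto_sum_nat_add F hFsum).comp (tendsto_add_atTop_nat 1)
    refine le_antisymm ?_ zero_le
    calc μH[s] Ω ≤ liminf (fun n => ∑' j, EMetric.diam (t n j) ^ s) atTop := hμ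
      _ ≤ liminf (fun n : ℕ => ∑' j, F (j + (n + 1))) atTop :=
          liminf_le_liminf (Eventually.of_forall hterm)
      _ = 0 := htail.liminf_eq
  refine le_antisymm (dimH_le fun d' hd' => ?_) zero_le
  rcases eq_or_lt_of_le (zero_le : (0 : ℝ≥0) ≤ d') with h0 | h0
  · simp [← h0]
  · exfalso
    have := key d' (by exact_mod_cast h0)
    rw [this] at hd'
    exact ENNReal.zero_ne_top hd'
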